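/- If the cosets d_i·ℤ + r_i for i = 1,…,s partition ℤ (with every d_i > 1), and some modulus d_k does not properly divide any other modulus d_j (j ≠ k), then d_k appears at least twice among d_1,…,d_s. -/

import Mathlib

open Finset Complex


/-- In an exact covering system of `ℤ`, a modulus that does not properly divide any other
modulus appears at least twice. -/
theorem erdos_nondividing_modulus_repeats
    (s : ℕ) (d : Fin s → ℕ) (r : Fin s → ℤ)
    (hd : ∀ i, 1 < d i)
    (hpart : ∀ x : ℤ, ∃! i : Fin s, (d i : ℤ) ∣ x - r i)
    (k : Fin s)
    (hk : ∀ j : Fin s, j ≠ k → ¬ (d k ∣ d j ∧ d k ≠ d j)) :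
    ∃ j : Fin s, j ≠ k ∧ d j = d k := by
  by_contra hcon
  push_neg at hcon
  -- setup
  set N : ℕ := ∏ i, d i with hN
  have hdvdN : ∀ i, d i ∣ N := fun i => Finset.dvd_prod_of_mem d (mem_univ i)
  have hdpos : ∀ i, 0 < d i := fun i => lt_trans one_pos (hd i)
  have hNpos : 0 < N := Finset.prod_pos fun i _ => hdpos i
  set m : Fin s → ℕ := fun i => N / d i with hm
  have hdm : ∀ i, d i * m i = N := fun i => Nat.mul_div_cancel' (hdvdN i)
  have hmpos : ∀ i, 0 < m i := fun i => Nat.div_pos (Nat.le_of_dvd hNpos (hdvdN i)) (hdpos i)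
  set a : Fin s → ℕ := fun i => (r i % (d i : ℤ)).toNat with ha
  have haz : ∀ i, (a i : ℤ) = r i % (d i : ℤ) := fun i =>
    Int.toNat_of_nonneg (Int.emod_nonneg _ (by exact_mod_cast (hdpos i).ne'))
  have halt : ∀ i, a i < d i := by
    intro i
    have h1 : r i % (d i : ℤ) < d i :=
      Int.emod_lt_of_pos (r i) (by exact_mod_cast hdpos i)
    have := haz i
    exact_mod_cast this ▸ h1
  have hadvd : ∀ i, (d i : ℤ) ∣ (a i : ℤ) - r i := by
    intro i
    have h1 : (d i : ℤ) ∣ r i - a i := by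
      rw [haz i]
      exact ⟨r i / d i, by have := Int.mul_ediv_add_emod (r i) (d i); linarith⟩
    exact neg_sub (r i) ((a i : ℤ)) ▸ dvd_neg.mpr h1
  -- root of unity
  set ζ : ℂ := Complex.exp (2 * Real.pi * Complex.I / (d k)) with hzeta
  have hprim : IsPrimitiveRoot ζ (d k) :=
    Complex.isPrimitiveRoot_exp (d k) (hdpos k).ne'
  have hζdk : ζ ^ (d k) = 1 := hprim.pow_eq_one
  have hζne1 : ζ ≠ 1 := hprim.ne_one (hd k)
  have hζN : ζ ^ N = 1 := by
    obtain ⟨c, hc⟩ := hdvdN k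
    rw [hc, pow_mul, hζdk, one_pow]
  -- total sum is zero
  have htot : ∑ x ∈ range N, ζ ^ x = 0 := by
    rw [geom_sum_eq hζne1, hζN, sub_self, zero_div]
  -- split by covering class
  have hsingle : ∀ x : ℕ, (univ.filter (fun i => (d i : ℤ) ∣ (x : ℤ) - r i)) =
      {(hpart (x : ℤ)).choose} := by
    intro x
    obtain ⟨hc1, hc2⟩ := (hpart (x : ℤ)).choose_spec
    ext j
    simp only [mem_filter, mem_univ, true_and, mem_singleton]
    exact ⟨fun h => hc2 j h, fun h => h ▸ hc1⟩
  have hswap : ∑ x ∈ range N, ζ ^ x =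
      ∑ i : Fin s, ∑ x ∈ (range N).filter (fun x : ℕ => (d i : ℤ) ∣ (x : ℤ) - r i), ζ ^ x := by
    have h1 : ∀ x ∈ range N, ζ ^ x =
        ∑ i ∈ univ.filter (fun i => (d i : ℤ) ∣ (x : ℤ) - r i), ζ ^ x := by
      intro x _
      rw [hsingle x, Finset.sum_singleton]
    rw [Finset.sum_congr rfl h1]
    simp only [Finset.sum_filter]
    exact Finset.sum_comm
  -- evaluate each inner sum
  have hfil : ∀ i : Fin s, (range N).filter (fun x : ℕ => (d i : ℤ) ∣ (x : ℤ) - r i) =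
      (range (m i)).image (fun t => a i + d i * t) := by
    intro i
    ext x
    simp only [mem_filter, mem_range, mem_image]
    constructor
    · rintro ⟨hxN, hdvd⟩
      have hxa : (d i : ℤ) ∣ (x : ℤ) - a i := by
        have h2 := dvd_sub hdvd (hadvd i)
        simpa [sub_sub_sub_cancel_right] using h2
      obtain ⟨c, hc⟩ := hxa
      have hax : (a i : ℤ) < d i := by exact_mod_cast halt i
      have hc0 : 0 ≤ c := by
        by_contra h
        push_neg at h
        have hle : (d i : ℤ) * c ≤ (d i) * (-1) :=
          mul_le_mul_of_nonneg_left (by omega) (by positivity)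
        have hx0 : (0 : ℤ) ≤ (x : ℤ) := Int.natCast_nonneg x
        omega
      have hct : (c.toNat : ℤ) = c := Int.toNat_of_nonneg hc0
      have hxeq : (x : ℤ) = (a i : ℤ) + (d i : ℤ) * (c.toNat : ℤ) := by
        rw [hct]; omega
      have hxeqn : x = a i + d i * c.toNat := by exact_mod_cast hxeq
      refine ⟨c.toNat, ?_, hxeqn.symm⟩
      have hlt : d i * c.toNat < d i * m i := by
        have := hdm i
        omega
      exact Nat.lt_of_mul_lt_mul_left hlt
    · rintro ⟨t, htm, rfl⟩
      constructor
      · have := halt i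
        calc a i + d i * t < d i + d i * t := by omega
          _ = d i * (t + 1) := by ring
          _ ≤ d i * m i := Nat.mul_le_mul_left _ (by omega)
          _ = N := hdm i
      · push_cast
        have : (a i : ℤ) + d i * t - r i = ((a i : ℤ) - r i) + d i * t := by ring
        rw [this]
        exact dvd_add (hadvd i) ⟨t, rfl⟩
  have hinner : ∀ i : Fin s,
      ∑ x ∈ (range N).filter (fun x : ℕ => (d i : ℤ) ∣ (x : ℤ) - r i), ζ ^ x =
      ζ ^ a i * ∑ t ∈ range (m i), (ζ ^ d i) ^ t := by
    intro i
    rw [hfil i, Finset.sum_image (by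
      intro t1 _ t2 _ h
      have h2 : d i * t1 = d i * t2 := by simp only at h; omega
      exact Nat.eq_of_mul_eq_mul_left (hdpos i) h2)]
    rw [Finset.mul_sum]
    refine Finset.sum_congr rfl fun t _ => ?_
    rw [pow_add, pow_mul]
  -- inner sums vanish for i ≠ k
  have hvanish : ∀ i : Fin s, i ≠ k → ∑ t ∈ range (m i), (ζ ^ d i) ^ t = 0 := by
    intro i hik
    have hnd : ¬ (d k ∣ d i) := by
      intro hdd
      exact absurd (hcon i hik) (by
        intro hne
        exact (hk i hik) ⟨hdd, fun h => hne h.symm⟩)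
    have hne : ζ ^ d i ≠ 1 := fun h => hnd (hprim.dvd_of_pow_eq_one _ h)
    rw [geom_sum_eq hne, ← pow_mul, hdm i, hζN, sub_self, zero_div]
  -- inner sum at k is m k
  have hksum : ∑ t ∈ range (m k), (ζ ^ d k) ^ t = (m k : ℂ) := by
    rw [hζdk]
    simp
  -- combine
  rw [htot] at hswap
  rw [Finset.sum_congr rfl (fun i _ => hinner i)] at hswap
  rw [Finset.sum_eq_single k (fun i _ hik => by rw [hvanish i hik, mul_zero])
    (fun h => absurd (mem_univ k) h)] at hswap
  rw [hksum] at hswap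
  have hζ0 : ζ ≠ 0 := Complex.exp_ne_zero _
  have : (m k : ℂ) ≠ 0 := Nat.cast_ne_zero.mpr (hmpos k).ne'
  exact absurd hswap.symm (mul_ne_zero (pow_ne_zero _ hζ0) this)
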